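/- Let s ≥ 0 and t ≥ s + 2 be integers, let a ∈ {0,1}^s and b ∈ {0,1}^t extend a (i.e. the first s letters of b are a). Let h be an odd multiple of 2^s. Identify words in {0,1}^t with elements of ℤ/2^tℤ via the 2-adic encoding (addition with carry from left to right, i.e. the word w represents Σ_{i<t} w_i·2^i). Then for every u, v ∈ {0,1} there exists a unique integer i ∈ {0,1,2,3} such that either (b + i·2^s has first s+2 letters a0u and b + h + i·2^s has first s+2 letters a1v) or (b + i·2^s has first s+2 letters a1v and b + h + i·2^s has first s+2 letters a0u). -/

import Mathlib

open Filter Metric Set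
open scoped Classical

namespace RQA

variable {X : Type*} [MetricSpace X]

/-- Correlation sum `C_m(x,n,ε)` with respect to the Bowen metric `ρ_m`:
`ρ_m(f^[i] x, f^[j] x) ≤ ε ↔ ∀ k < m, dist (f^[i+k] x) (f^[j+k] x) ≤ ε`. -/
noncomputable def corrSum (f : X → X) (x : X) (m n : ℕ) (ε : ℝ) : ℝ :=
  (((Finset.range n ×ˢ Finset.range n).filter
      (fun p => ∀ k < m, dist (f^[p.1 + k] x) (f^[p.2 + k] x) ≤ ε)).card : ℝ) / (n : ℝ) ^ 2

/-- Correlation sum `C_∞(x,n,ε)` with respect to the metric `ρ_∞`. -/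
noncomputable def corrSumInf (f : X → X) (x : X) (n : ℕ) (ε : ℝ) : ℝ :=
  (((Finset.range n ×ˢ Finset.range n).filter
      (fun p => ∀ k : ℕ, dist (f^[p.1 + k] x) (f^[p.2 + k] x) ≤ ε)).card : ℝ) / (n : ℝ) ^ 2

/-- Lower asymptotic correlation sum `C̲_m(x,ε)`. -/
noncomputable def lowerCorr (f : X → X) (x : X) (m : ℕ) (ε : ℝ) : ℝ :=
  liminf (fun n => corrSum f x m n ε) atTop

/-- Upper asymptotic correlation sum `C̄_m(x,ε)`. -/
noncomputable def upperCorr (f : X → X) (x : X) (m : ℕ) (ε : ℝ) : ℝ :=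
  limsup (fun n => corrSum f x m n ε) atTop

/-- Recurrence `m`-determinism `DET_m(x,n,ε) = C_m(x,n,ε)/C_1(x,n,ε)`. -/
noncomputable def detSum (f : X → X) (x : X) (m n : ℕ) (ε : ℝ) : ℝ :=
  corrSum f x m n ε / corrSum f x 1 n ε

/-- Recurrence `∞`-determinism `DET_∞(x,n,ε) = C_∞(x,n,ε)/C_1(x,n,ε)`. -/
noncomputable def detSumInf (f : X → X) (x : X) (n : ℕ) (ε : ℝ) : ℝ :=
  corrSumInf f x n ε / corrSum f x 1 n ε

/-- Lower asymptotic recurrence determinism `DET̲_m(x,ε)`. -/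
noncomputable def lowerDet (f : X → X) (x : X) (m : ℕ) (ε : ℝ) : ℝ :=
  liminf (fun n => detSum f x m n ε) atTop

/-- Upper asymptotic recurrence determinism `DET̄_m(x,ε)`. -/
noncomputable def upperDet (f : X → X) (x : X) (m : ℕ) (ε : ℝ) : ℝ :=
  limsup (fun n => detSum f x m n ε) atTop

/-- `C̄_∞(x,ε) = lim_m C̄_m(x,ε)`; since `m ↦ C̄_m(x,ε)` is non-increasing,
the limit equals the infimum over `m ≥ 1`. -/
noncomputable def upperCorrInf (f : X → X) (x : X) (ε : ℝ) : ℝ :=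
  ⨅ m : ℕ, upperCorr f x (m + 1) ε

/-- `C̲_∞(x,ε) = lim_m C̲_m(x,ε)` (a limit of a non-increasing sequence). -/
noncomputable def lowerCorrInf (f : X → X) (x : X) (ε : ℝ) : ℝ :=
  ⨅ m : ℕ, lowerCorr f x (m + 1) ε

/-- `DET̄_∞(x,ε) = lim_m DET̄_m(x,ε)` (a limit of a non-increasing sequence). -/
noncomputable def upperDetInf (f : X → X) (x : X) (ε : ℝ) : ℝ :=
  ⨅ m : ℕ, upperDet f x (m + 1) ε

/-- `DET̲_∞(x,ε) = lim_m DET̲_m(x,ε)` (a limit of a non-increasing sequence). -/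
noncomputable def lowerDetInf (f : X → X) (x : X) (ε : ℝ) : ℝ :=
  ⨅ m : ℕ, lowerDet f x (m + 1) ε

/-- The ω-limit set of `x`: the set of limit points of the trajectory `(f^[n] x)`. -/
def omegaSet (f : X → X) (x : X) : Set X :=
  {y | ∃ φ : ℕ → ℕ, StrictMono φ ∧ Tendsto (fun n => f^[φ n] x) atTop (nhds y)}

/-- Distance between two subsets of `ℝ`. -/
noncomputable def setDist (A B : Set ℝ) : ℝ :=
  sInf {d | ∃ a ∈ A, ∃ b ∈ B, d = dist a b}

/-- The binary word of length `t` given by the binary digits of `n`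
(the 2-adic encoding, least significant digit first; addition of integers to
words is addition with carry from left to right, i.e. ordinary addition of the
encoded values modulo `2^t`). -/
def word (t n : ℕ) : Fin t → Bool := fun i => n.testBit i.val

/-- The value `∑ w_i 2^i` of a binary word under the 2-adic encoding. -/
def encodeWord {t : ℕ} (w : Fin t → Bool) : ℕ :=
  ∑ i : Fin t, if w i then 2 ^ i.val else 0

end RQA

open RQA

private theorem stmt6_geom : ∀ n : ℕ, ∑ i ∈ Finset.range n, 2 ^ i = 2 ^ n - 1 := by
  intro n
  induction n with
  | zero => simp
  | succ n ih => rw [Finset.sum_range_succ, ih]; have := Nat.one_le_two_pow (n := n); omega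

private theorem stmt6_encode_lt {s : ℕ} (a : Fin s → Bool) : encodeWord a < 2 ^ s := by
  have h1 : encodeWord a ≤ ∑ i : Fin s, 2 ^ i.val := by
    apply Finset.sum_le_sum
    intro i _
    have : (0:ℕ) < 2 ^ i.val := Nat.pow_pos (by norm_num)
    split <;> omega
  have h2 : ∑ i : Fin s, 2 ^ i.val = 2 ^ s - 1 := by
    rw [Fin.sum_univ_eq_sum_range (fun i => 2 ^ i)]
    exact stmt6_geom s
  have : (1:ℕ) ≤ 2 ^ s := Nat.one_le_two_pow
  omega

private theorem stmt6_encode_split (s t : ℕ) (hst : s ≤ t) (a : Fin s → Bool) (b : Fin t → Bool)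
    (hext : ∀ i : Fin s, b (Fin.castLE hst i) = a i) :
    ∃ M, encodeWord b = encodeWord a + 2 ^ s * M := by
  classical
  set f : ℕ → ℕ := fun i => if h : i < t then (if b ⟨i, h⟩ then 2 ^ i else 0) else 0 with hf
  have hb : encodeWord b = ∑ i ∈ Finset.range t, f i := by
    rw [← Fin.sum_univ_eq_sum_range]
    apply Finset.sum_congr rfl
    intro i _
    simp [hf, i.isLt, encodeWord]
  have hsplit : ∑ i ∈ Finset.range s, f i + ∑ i ∈ Finset.Ico s t, f i
      = ∑ i ∈ Finset.range t, f i := by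
    simp only [Finset.range_eq_Ico]
    exact Finset.sum_Ico_consecutive _ (Nat.zero_le s) hst
  have ha : ∑ i ∈ Finset.range s, f i = encodeWord a := by
    rw [← Fin.sum_univ_eq_sum_range]
    apply Finset.sum_congr rfl
    intro i _
    have hi : (i : ℕ) < t := lt_of_lt_of_le i.isLt hst
    have hx := hext i
    simp only [hf, dif_pos hi]
    rw [show (⟨(i:ℕ), hi⟩ : Fin t) = Fin.castLE hst i from rfl, hx]
  have hdvd : 2 ^ s ∣ ∑ i ∈ Finset.Ico s t, f i := by
    apply Finset.dvd_sum
    intro i hi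
    simp only [Finset.mem_Ico] at hi
    simp only [hf, dif_pos hi.2]
    split
    · exact pow_dvd_pow 2 hi.1
    · exact dvd_zero _
  obtain ⟨M, hM⟩ := hdvd
  exact ⟨M, by rw [hb, ← hsplit, ha, hM]⟩

private theorem stmt6_key (m jm tu tv : ℕ) (hm : m < 4) (hjm : jm = 1 ∨ jm = 3)
    (htu : tu = 0 ∨ tu = 2) (htv : tv = 1 ∨ tv = 3) :
    ∃! i : ℕ, i < 4 ∧ (((m + i) % 4 = tu ∧ (m + jm + i) % 4 = tv) ∨
      ((m + i) % 4 = tv ∧ (m + jm + i) % 4 = tu)) := by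
  interval_cases m <;> rcases hjm with rfl|rfl <;> rcases htu with rfl|rfl <;>
    rcases htv with rfl|rfl <;>
    first
    | exact ⟨0, by omega, fun y hy => by omega⟩
    | exact ⟨1, by omega, fun y hy => by omega⟩
    | exact ⟨2, by omega, fun y hy => by omega⟩
    | exact ⟨3, by omega, fun y hy => by omega⟩


/-- combinatorial lemma on dyadic words. Words in `{0,1}^t` are
identified with residues mod `2^t` via the 2-adic encoding `encodeWord`; taking
the first `s+2` letters corresponds to reducing mod `2^(s+2)`, and the word
`a0u` (resp. `a1v`) has encoded value `encodeWord a + u·2^(s+1)`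
(resp. `encodeWord a + 2^s + v·2^(s+1)`). -/
theorem stmt_6 (s t : ℕ) (hst : s + 2 ≤ t) (a : Fin s → Bool) (b : Fin t → Bool)
    (hext : ∀ i : Fin s, b (Fin.castLE (by omega) i) = a i)
    (h j : ℕ) (hj : Odd j) (hh : h = j * 2 ^ s) (u v : Bool) :
    ∃! i : ℕ, i < 4 ∧
      (((encodeWord b + i * 2 ^ s) % 2 ^ (s + 2)
            = encodeWord a + (if u then 2 ^ (s + 1) else 0) ∧
        (encodeWord b + h + i * 2 ^ s) % 2 ^ (s + 2)
            = encodeWord a + 2 ^ s + (if v then 2 ^ (s + 1) else 0)) ∨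
       ((encodeWord b + i * 2 ^ s) % 2 ^ (s + 2)
            = encodeWord a + 2 ^ s + (if v then 2 ^ (s + 1) else 0) ∧
        (encodeWord b + h + i * 2 ^ s) % 2 ^ (s + 2)
            = encodeWord a + (if u then 2 ^ (s + 1) else 0))) := by
  classical
  obtain ⟨M, hM⟩ := stmt6_encode_split s t (by omega) a b (fun i => hext i)
  set A := encodeWord a with hA
  have hAlt : A < 2 ^ s := stmt6_encode_lt a
  have hpos : (0:ℕ) < 2 ^ s := Nat.pow_pos (by norm_num)
  have hmod : ∀ x : ℕ, (A + 2 ^ s * x) % 2 ^ (s + 2) = A + 2 ^ s * (x % 4) := by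
    intro x
    have hx : x = x % 4 + 4 * (x / 4) := (Nat.mod_add_div x 4).symm
    have hrw : A + 2 ^ s * x = A + 2 ^ s * (x % 4) + 2 ^ (s + 2) * (x / 4) := by
      conv_lhs => rw [hx]
      have h4 : (2:ℕ) ^ (s + 2) = 2 ^ s * 4 := by rw [pow_add]; norm_num
      rw [h4]; ring
    rw [hrw, Nat.add_mul_mod_self_left, Nat.mod_eq_of_lt]
    have : x % 4 < 4 := Nat.mod_lt _ (by norm_num)
    have h4 : 2 ^ (s + 2) = 2 ^ s * 4 := by rw [pow_succ, pow_succ]; ring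
    nlinarith [Nat.mul_le_mul_left (2 ^ s) (Nat.le_of_lt_succ this)]
  set tu : ℕ := if u then 2 else 0 with htu
  set tv : ℕ := if v then 3 else 1 with htv
  have hu : A + (if u then 2 ^ (s + 1) else 0) = A + 2 ^ s * tu := by
    cases u <;> simp [htu, pow_succ] <;> ring
  have hv : A + 2 ^ s + (if v then 2 ^ (s + 1) else 0) = A + 2 ^ s * tv := by
    cases v <;> simp [htv, pow_succ] <;> ring
  have hcancel : ∀ x y : ℕ, (A + 2 ^ s * x = A + 2 ^ s * y) ↔ x = y := by
    intro x y
    constructor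
    · intro hxy
      have h1 : 2 ^ s * x = 2 ^ s * y := by omega
      exact Nat.eq_of_mul_eq_mul_left hpos h1
    · rintro rfl; rfl
  have he1 : ∀ i : ℕ, encodeWord b + i * 2 ^ s = A + 2 ^ s * (M + i) := by
    intro i; rw [hM]; ring
  have he2 : ∀ i : ℕ, encodeWord b + h + i * 2 ^ s = A + 2 ^ s * (M + j + i) := by
    intro i; rw [hM, hh]; ring
  obtain ⟨k, hk⟩ := hj
  have hiff : ∀ i : ℕ,
      (i < 4 ∧
      (((encodeWord b + i * 2 ^ s) % 2 ^ (s + 2)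
            = encodeWord a + (if u then 2 ^ (s + 1) else 0) ∧
        (encodeWord b + h + i * 2 ^ s) % 2 ^ (s + 2)
            = encodeWord a + 2 ^ s + (if v then 2 ^ (s + 1) else 0)) ∨
       ((encodeWord b + i * 2 ^ s) % 2 ^ (s + 2)
            = encodeWord a + 2 ^ s + (if v then 2 ^ (s + 1) else 0) ∧
        (encodeWord b + h + i * 2 ^ s) % 2 ^ (s + 2)
            = encodeWord a + (if u then 2 ^ (s + 1) else 0)))) ↔
      (i < 4 ∧ (((M % 4 + i) % 4 = tu ∧ (M % 4 + j % 4 + i) % 4 = tv) ∨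
        ((M % 4 + i) % 4 = tv ∧ (M % 4 + j % 4 + i) % 4 = tu))) := by
    intro i
    rw [he1 i, he2 i, hmod, hmod, ← hA, hu, hv, hcancel, hcancel, hcancel, hcancel]
    constructor <;> rintro ⟨h4, hc⟩ <;> refine ⟨h4, ?_⟩ <;> omega
  rw [existsUnique_congr hiff]
  exact stmt6_key (M % 4) (j % 4) tu tv (by omega) (by omega)
    (by rcases u <;> simp [htu]) (by rcases v <;> simp [htv])
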